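/- Fix n ≥ 1 and define softmax : ℝ^n → ℝ^n by softmax(x)_i = exp(x_i) / Σ_{j=1}^{n} exp(x_j). Then softmax is 1-Lipschitz with respect to the Euclidean norm: ‖softmax(x) − softmax(y)‖₂ ≤ ‖x − y‖₂ for all x, y ∈ ℝ^n. -/

import Mathlib

open Finset

noncomputable def softmax {n : ℕ} (x : EuclideanSpace ℝ (Fin n)) : EuclideanSpace ℝ (Fin n) :=
  WithLp.toLp 2 (fun i => Real.exp (x i) / ∑ j, Real.exp (x j))

lemma sm_key {n : ℕ} (p v : Fin n → ℝ) (hp0 : ∀ i, 0 ≤ p i) (hp1 : ∑ i, p i = 1) :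
    ∑ i, (p i * (v i - ∑ j, p j * v j)) ^ 2 ≤ ∑ i, v i ^ 2 := by
  set m := ∑ j, p j * v j with hm
  have hple : ∀ i, p i ≤ 1 := by
    intro i
    calc p i ≤ ∑ j, p j := Finset.single_le_sum (fun j _ => hp0 j) (mem_univ i)
    _ = 1 := hp1
  have expand : ∀ i : Fin n, p i * (v i - m) ^ 2
      = p i * v i ^ 2 - 2 * m * (p i * v i) + m ^ 2 * p i := fun i => by ring
  calc ∑ i, (p i * (v i - m)) ^ 2 ≤ ∑ i, p i * (v i - m) ^ 2 := by
        apply Finset.sum_le_sum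
        intro i _
        have h1 : (p i * (v i - m)) ^ 2 = p i ^ 2 * (v i - m) ^ 2 := by ring
        rw [h1]
        have h2 : p i ^ 2 ≤ p i := by nlinarith [hp0 i, hple i]
        nlinarith [sq_nonneg (v i - m)]
    _ = (∑ i, p i * v i ^ 2) - 2 * m * (∑ i, p i * v i) + m ^ 2 * (∑ i, p i) := by
        simp only [expand, Finset.sum_add_distrib, Finset.sum_sub_distrib, ← Finset.mul_sum]
    _ = (∑ i, p i * v i ^ 2) - m ^ 2 := by rw [hp1, ← hm]; ring
    _ ≤ ∑ i, p i * v i ^ 2 := by nlinarith [sq_nonneg m]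
    _ ≤ ∑ i, v i ^ 2 := by
        apply Finset.sum_le_sum
        intro i _
        nlinarith [sq_nonneg (v i), hp0 i, hple i]

noncomputable def smDeriv {n : ℕ} (p : Fin n → ℝ) :
    EuclideanSpace ℝ (Fin n) →L[ℝ] EuclideanSpace ℝ (Fin n) :=
  LinearMap.toContinuousLinearMap
  { toFun := fun v => (WithLp.toLp 2 (fun i => p i * (v i - ∑ j, p j * v j)) : EuclideanSpace ℝ (Fin n))
    map_add' := by
      intro a b
      ext i
      simp only [PiLp.toLp_apply, PiLp.add_apply, mul_add, Finset.sum_add_distrib]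
      ring
    map_smul' := by
      intro c a
      ext i
      simp only [PiLp.toLp_apply, PiLp.smul_apply, smul_eq_mul, RingHom.id_apply]
      have : ∑ x, c * p x * a x = c * ∑ x, p x * a x := by
        rw [Finset.mul_sum]; exact Finset.sum_congr rfl fun j _ => by ring
      rw [show (∑ j, p j * (c * a j)) = ∑ x, c * p x * a x from
        Finset.sum_congr rfl fun j _ => by ring, this]
      ring }

lemma smDeriv_apply {n : ℕ} (p : Fin n → ℝ) (v : EuclideanSpace ℝ (Fin n)) (i : Fin n) :
    smDeriv p v i = p i * (v i - ∑ j, p j * v j) := rfl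

/-- For `n ≥ 1`, softmax is 1-Lipschitz with respect to the Euclidean norm. -/
theorem softmax_lipschitz (n : ℕ) (hn : 1 ≤ n) :
    ∀ x y : EuclideanSpace ℝ (Fin n), ‖softmax x - softmax y‖ ≤ ‖x - y‖ := by
  have : Nonempty (Fin n) := ⟨⟨0, hn⟩⟩
  have hS : ∀ x : EuclideanSpace ℝ (Fin n), 0 < ∑ j, Real.exp (x j) := fun x =>
    Finset.sum_pos (fun j _ => Real.exp_pos _) Finset.univ_nonempty
  set p : EuclideanSpace ℝ (Fin n) → Fin n → ℝ :=
    fun x i => Real.exp (x i) / ∑ j, Real.exp (x j) with hp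
  have hp0 : ∀ x i, 0 ≤ p x i := fun x i => div_nonneg (Real.exp_pos _).le (hS x).le
  have hp1 : ∀ x, ∑ i, p x i = 1 := by
    intro x
    rw [hp, ← Finset.sum_div]
    exact div_self (hS x).ne'
  have hderiv : ∀ x : EuclideanSpace ℝ (Fin n), HasFDerivAt softmax (smDeriv (p x)) x := by
    intro x
    set S := ∑ j, Real.exp (x j) with hSdef
    rw [← hasFDerivWithinAt_univ, hasFDerivWithinAt_piLp]
    intro i
    have hNum : HasFDerivAt (fun y : EuclideanSpace ℝ (Fin n) => Real.exp (y i))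
        (Real.exp (x i) • PiLp.proj 2 (fun _ : Fin n => ℝ) i) x :=
      (PiLp.hasFDerivAt_apply 2 x i).exp
    have hDen : HasFDerivAt (fun y : EuclideanSpace ℝ (Fin n) => ∑ j, Real.exp (y j))
        (∑ j, Real.exp (x j) • PiLp.proj 2 (fun _ : Fin n => ℝ) j) x :=
      HasFDerivAt.fun_sum (fun j _ => (PiLp.hasFDerivAt_apply 2 x j).exp)
    have hInv : HasFDerivAt (fun y : EuclideanSpace ℝ (Fin n) => (∑ j, Real.exp (y j))⁻¹)
        ((-(S ^ 2)⁻¹) • (∑ j, Real.exp (x j) • PiLp.proj 2 (fun _ : Fin n => ℝ) j)) x :=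
      (hasDerivAt_inv (hS x).ne').comp_hasFDerivAt x hDen
    have hMul := hNum.mul hInv
    have heq : PiLp.proj 2 (fun _ : Fin n => ℝ) i ∘L smDeriv (p x) =
        Real.exp (x i) •
            ((-(S ^ 2)⁻¹) • (∑ j, Real.exp (x j) • PiLp.proj 2 (fun _ : Fin n => ℝ) j)) +
          S⁻¹ • (Real.exp (x i) • PiLp.proj 2 (fun _ : Fin n => ℝ) i) := by
      ext v
      simp only [ContinuousLinearMap.comp_apply, ContinuousLinearMap.add_apply,
        ContinuousLinearMap.coe_smul', Pi.smul_apply, ContinuousLinearMap.sum_apply,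
        smul_eq_mul, PiLp.proj_apply, Finset.mul_sum]
      rw [smDeriv_apply, hp]
      simp only []
      have hsum : ∑ j, Real.exp (x j) / S * v j = (∑ j, Real.exp (x j) * v j) / S := by
        rw [Finset.sum_div]
        exact Finset.sum_congr rfl fun j _ => by ring
      rw [hsum]
      have hSne : S ≠ 0 := (hS x).ne'
      have hA : ∑ j, Real.exp (x i) * (-(S ^ 2)⁻¹ * (Real.exp (x j) * v j))
          = Real.exp (x i) * (-(S ^ 2)⁻¹) * ∑ j, Real.exp (x j) * v j := by
        rw [Finset.mul_sum]
        exact Finset.sum_congr rfl fun j _ => by ring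
      rw [hA]
      field_simp
      ring
    rw [show (fun y : EuclideanSpace ℝ (Fin n) => softmax y i)
        = fun y : EuclideanSpace ℝ (Fin n) =>
            Real.exp (y i) * (∑ j, Real.exp (y j))⁻¹ from
      funext fun y => by simp [softmax, div_eq_mul_inv]]
    rw [heq]
    exact hMul.hasFDerivWithinAt
  have hbound : ∀ x : EuclideanSpace ℝ (Fin n), ‖smDeriv (p x)‖ ≤ 1 := by
    intro x
    apply ContinuousLinearMap.opNorm_le_bound _ zero_le_one
    intro v
    rw [one_mul, EuclideanSpace.norm_eq, EuclideanSpace.norm_eq]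
    apply Real.sqrt_le_sqrt
    simp only [smDeriv_apply, Real.norm_eq_abs, sq_abs]
    exact sm_key (p x) v (hp0 x) (hp1 x)
  intro x y
  have := convex_univ.norm_image_sub_le_of_norm_hasFDerivWithin_le
    (f := softmax) (f' := fun z => smDeriv (p z)) (C := 1)
    (fun z _ => (hderiv z).hasFDerivWithinAt) (fun z _ => hbound z)
    (Set.mem_univ y) (Set.mem_univ x)
  simpa using this
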